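/- arXiv:2409.16903 — 4 statements merged into one kernel-verified Lean document; each statement's English description precedes it below -/
import Mathlib

section
/- Let f : ℝ → ℝ be a function of bounded variation on [a,b], and let 𝒫 be a partition of [a,b] into finitely many intervals X₁,…,X_K. Let f^𝒫 be the piecewise constant function which on each interval Xₙ takes a constant value lying between the infimum and supremum of f on Xₙ. Then ∫_a^b |f^𝒫(x) − f(x)| dx ≤ Var(f,[a,b]) · mesh(𝒫), where mesh(𝒫) is the maximum length of the intervals Xₙ and Var(f,[a,b]) is the total variation of f on [a,b]. -/
open MeasureTheory Set

lemma sum_eVar_aux (f : ℝ → ℝ) (y : ℕ → ℝ) (hm : Monotone y) :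
    ∀ K : ℕ, ∑ i ∈ Finset.range K, eVariationOn f (Set.Icc (y i) (y (i + 1)))
      = eVariationOn f (Set.Icc (y 0) (y K)) := by
  intro K
  induction K with
  | zero =>
      simp [eVariationOn.subsingleton f (by simp [Set.Icc_self] : (Set.Icc (y 0) (y 0)).Subsingleton)]
  | succ K ih =>
      rw [Finset.sum_range_succ, ih]
      have h := eVariationOn.Icc_add_Icc f (s := Set.univ) (hm (Nat.zero_le K))
        (hm (Nat.le_succ K)) (Set.mem_univ _)
      simpa [Set.univ_inter] using h

/-- Poincaré-type inequality for piecewise constant approximations: if `f` has bounded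
variation on `[a,b]`, `a = x₀ < x₁ < ⋯ < x_K = b` is a partition, and `fP` is piecewise
constant on the partition intervals with value lying between the infimum and supremum of
`f` on the corresponding interval, then `∫_a^b |fP − f| ≤ Var(f,[a,b]) · mesh`, where
`mesh` bounds the lengths of the partition intervals. -/
theorem stmt1 (a b : ℝ) (f fP : ℝ → ℝ)
    (hBV : BoundedVariationOn f (Set.Icc a b))
    (K : ℕ) (hK : 0 < K) (x : Fin (K + 1) → ℝ)
    (hmono : StrictMono x) (hx0 : x 0 = a) (hxK : x (Fin.last K) = b)
    (hconst : ∀ i : Fin K, ∃ v : ℝ,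
      sInf (f '' Set.Icc (x i.castSucc) (x i.succ)) ≤ v ∧
      v ≤ sSup (f '' Set.Icc (x i.castSucc) (x i.succ)) ∧
      ∀ t ∈ Set.Ico (x i.castSucc) (x i.succ), fP t = v)
    (mesh : ℝ) (hmesh : ∀ i : Fin K, x i.succ - x i.castSucc ≤ mesh) :
    ∫ t in Set.Icc a b, |fP t - f t| ≤ (eVariationOn f (Set.Icc a b)).toReal * mesh := by
  -- basic facts
  have hab : a ≤ b := by
    rw [← hx0, ← hxK]; exact (hmono.monotone (Fin.zero_le _))
  have hmesh0 : 0 < mesh := by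
    have i0 : Fin K := ⟨0, hK⟩
    have := hmesh i0
    have hlt : x i0.castSucc < x i0.succ := hmono (Fin.castSucc_lt_succ : i0.castSucc < i0.succ)
    linarith
  have hVtop : eVariationOn f (Set.Icc a b) ≠ ⊤ := hBV
  have hVnn : 0 ≤ (eVariationOn f (Set.Icc a b)).toReal := ENNReal.toReal_nonneg
  -- subset facts
  have hsub : ∀ i : Fin K, Set.Icc (x i.castSucc) (x i.succ) ⊆ Set.Icc a b := by
    intro i t ht
    constructor
    · rw [← hx0]; exact le_trans (hmono.monotone (Fin.zero_le _)) ht.1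
    · rw [← hxK]; exact le_trans ht.2 (hmono.monotone (Fin.le_last _))
  -- variation on each subinterval
  set V : Fin K → ENNReal := fun i => eVariationOn f (Set.Icc (x i.castSucc) (x i.succ)) with hV
  have hVle : ∀ i, V i ≤ eVariationOn f (Set.Icc a b) := fun i =>
    eVariationOn.mono f (hsub i)
  have hVfin : ∀ i, V i ≠ ⊤ := fun i => (lt_of_le_of_lt (hVle i) hVtop.lt_top).ne
  -- pointwise bound on each Ico
  have hpt : ∀ i : Fin K, ∀ t ∈ Set.Ico (x i.castSucc) (x i.succ),
      (‖fP t - f t‖₊ : ENNReal) ≤ V i := by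
    intro i t ht
    obtain ⟨v, hv1, hv2, hv3⟩ := hconst i
    have hIcc : t ∈ Set.Icc (x i.castSucc) (x i.succ) := ⟨ht.1, ht.2.le⟩
    have hxx : x i.castSucc ≤ x i.succ := (hmono (Fin.castSucc_lt_succ : i.castSucc < i.succ)).le
    have hne : (f '' Set.Icc (x i.castSucc) (x i.succ)).Nonempty :=
      ⟨f t, Set.mem_image_of_mem f hIcc⟩
    -- distances within the image are bounded by (V i).toReal
    have hdist : ∀ s u, s ∈ Set.Icc (x i.castSucc) (x i.succ) →
        u ∈ Set.Icc (x i.castSucc) (x i.succ) → f s - f u ≤ (V i).toReal := by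
      intro s u hs hu
      have h1 : edist (f s) (f u) ≤ V i := eVariationOn.edist_le f hs hu
      have h2 : dist (f s) (f u) ≤ (V i).toReal := by
        rw [dist_edist]
        exact ENNReal.toReal_mono (hVfin i) h1
      calc f s - f u ≤ |f s - f u| := le_abs_self _
        _ = dist (f s) (f u) := (Real.dist_eq _ _).symm
        _ ≤ (V i).toReal := h2
    have hbddA : BddAbove (f '' Set.Icc (x i.castSucc) (x i.succ)) := by
      refine ⟨f (x i.castSucc) + (V i).toReal, ?_⟩
      rintro _ ⟨s, hs, rfl⟩
      have := hdist s (x i.castSucc) hs (Set.left_mem_Icc.2 hxx)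
      linarith
    have hbddB : BddBelow (f '' Set.Icc (x i.castSucc) (x i.succ)) := by
      refine ⟨f (x i.castSucc) - (V i).toReal, ?_⟩
      rintro _ ⟨s, hs, rfl⟩
      have := hdist (x i.castSucc) s (Set.left_mem_Icc.2 hxx) hs
      linarith
    have hss : sSup (f '' Set.Icc (x i.castSucc) (x i.succ))
        - sInf (f '' Set.Icc (x i.castSucc) (x i.succ)) ≤ (V i).toReal := by
      have : sSup (f '' Set.Icc (x i.castSucc) (x i.succ))
          ≤ sInf (f '' Set.Icc (x i.castSucc) (x i.succ)) + (V i).toReal := by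
        apply csSup_le hne
        rintro _ ⟨s, hs, rfl⟩
        have : f s - (V i).toReal ≤ sInf (f '' Set.Icc (x i.castSucc) (x i.succ)) := by
          apply le_csInf hne
          rintro _ ⟨u, hu, rfl⟩
          have := hdist s u hs hu
          linarith
        linarith
      linarith
    have hft1 : f t ≤ sSup (f '' Set.Icc (x i.castSucc) (x i.succ)) :=
      le_csSup hbddA (Set.mem_image_of_mem f hIcc)
    have hft2 : sInf (f '' Set.Icc (x i.castSucc) (x i.succ)) ≤ f t :=
      csInf_le hbddB (Set.mem_image_of_mem f hIcc)
    have habs : |fP t - f t| ≤ (V i).toReal := by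
      rw [hv3 t ht, abs_sub_le_iff]
      constructor <;> linarith
    calc (‖fP t - f t‖₊ : ENNReal) = ENNReal.ofReal |fP t - f t| := by
          rw [← Real.norm_eq_abs, ofReal_norm, enorm_eq_nnnorm]
      _ ≤ ENNReal.ofReal (V i).toReal := ENNReal.ofReal_le_ofReal habs
      _ = V i := ENNReal.ofReal_toReal (hVfin i)
  -- lintegral bound on each Ico
  have hlint : ∀ i : Fin K, ∫⁻ t in Set.Ico (x i.castSucc) (x i.succ),
      (‖fP t - f t‖₊ : ENNReal) ≤ V i * ENNReal.ofReal mesh := by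
    intro i
    calc ∫⁻ t in Set.Ico (x i.castSucc) (x i.succ), (‖fP t - f t‖₊ : ENNReal)
        ≤ ∫⁻ _ in Set.Ico (x i.castSucc) (x i.succ), V i :=
          setLIntegral_mono' measurableSet_Ico (hpt i)
      _ = V i * volume (Set.Ico (x i.castSucc) (x i.succ)) := setLIntegral_const _ _
      _ = V i * ENNReal.ofReal (x i.succ - x i.castSucc) := by rw [Real.volume_Ico]
      _ ≤ V i * ENNReal.ofReal mesh :=
          mul_le_mul_right (ENNReal.ofReal_le_ofReal (hmesh i)) _
  -- covering of Icc a b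
  have hcover : Set.Icc a b ⊆ (⋃ i : Fin K, Set.Ico (x i.castSucc) (x i.succ)) ∪ {b} := by
    intro t ht
    rcases eq_or_lt_of_le ht.2 with h | h
    · exact Or.inr (by simp [h])
    · left
      have htb : t < x (Fin.last K) := by rwa [hxK]
      have hta : x 0 ≤ t := by rw [hx0]; exact ht.1
      -- largest index j with x j ≤ t
      set S : Finset (Fin (K + 1)) := Finset.univ.filter (fun j => x j ≤ t) with hS
      have hSne : S.Nonempty := ⟨0, by simp [hS, hta]⟩
      set j := S.max' hSne with hj
      have hjt : x j ≤ t := by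
        have := S.max'_mem hSne
        simpa [hS] using this
      have hjlt : (j : ℕ) < K := by
        by_contra hcon
        have : j = Fin.last K := by
          apply Fin.ext
          simp only [Fin.val_last]
          omega
        rw [this] at hjt
        exact absurd hjt (not_le.2 htb)
      refine Set.mem_iUnion.2 ⟨⟨j, hjlt⟩, hjt, ?_⟩
      by_contra hcon
      push_neg at hcon
      have hmem : (⟨j, hjlt⟩ : Fin K).succ ∈ S := by
        simp only [hS, Finset.mem_filter, Finset.mem_univ, true_and]
        exact hcon
      have := S.le_max' _ hmem
      rw [← hj] at this
      have hlt : j < (⟨j, hjlt⟩ : Fin K).succ := by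
        have : ((⟨j, hjlt⟩ : Fin K).succ : ℕ) = (j : ℕ) + 1 := rfl
        exact Fin.lt_def.2 (by omega)
      exact absurd this (not_le.2 hlt)
  -- sum of variations equals total variation
  have hsum : ∑ i : Fin K, V i = eVariationOn f (Set.Icc a b) := by
    set y : ℕ → ℝ := fun n => x ⟨min n K, Nat.lt_succ_of_le (min_le_right _ _)⟩ with hy
    have hym : Monotone y := by
      intro n m hnm
      exact hmono.monotone (Fin.mk_le_mk.2 (min_le_min_right _ hnm))
    have := sum_eVar_aux f y hym K
    have hy0 : y 0 = a := by simp [hy, Nat.min_eq_left (Nat.zero_le K), hx0]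
    have hyK : y K = b := by
      rw [← hxK]
      show x ⟨min K K, _⟩ = x (Fin.last K)
      congr 1
      exact Fin.ext (by simp [Fin.last])
    rw [hy0, hyK] at this
    rw [← this]
    rw [Finset.sum_range fun i => eVariationOn f (Set.Icc (y i) (y (i + 1)))]
    apply Finset.sum_congr rfl
    intro i _
    have h1 : y (i : ℕ) = x i.castSucc := by
      show x ⟨min (i : ℕ) K, _⟩ = x i.castSucc
      congr 1
      exact Fin.ext (by simp [Nat.min_eq_left (le_of_lt (Fin.is_lt i))])
    have h2 : y ((i : ℕ) + 1) = x i.succ := by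
      show x ⟨min ((i : ℕ) + 1) K, _⟩ = x i.succ
      congr 1
      exact Fin.ext (by simp [Nat.min_eq_left (Nat.succ_le_of_lt (Fin.is_lt i))])
    rw [h1, h2]
  -- main lintegral bound
  have hmain : ∫⁻ t in Set.Icc a b, (‖fP t - f t‖₊ : ENNReal)
      ≤ eVariationOn f (Set.Icc a b) * ENNReal.ofReal mesh := by
    calc ∫⁻ t in Set.Icc a b, (‖fP t - f t‖₊ : ENNReal)
        ≤ ∫⁻ t in (⋃ i : Fin K, Set.Ico (x i.castSucc) (x i.succ)) ∪ {b},
            (‖fP t - f t‖₊ : ENNReal) := lintegral_mono_set hcover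
      _ ≤ (∫⁻ t in ⋃ i : Fin K, Set.Ico (x i.castSucc) (x i.succ),
            (‖fP t - f t‖₊ : ENNReal)) + ∫⁻ t in ({b} : Set ℝ),
            (‖fP t - f t‖₊ : ENNReal) := lintegral_union_le _ _ _
      _ = ∫⁻ t in ⋃ i : Fin K, Set.Ico (x i.castSucc) (x i.succ),
            (‖fP t - f t‖₊ : ENNReal) := by
          rw [setLIntegral_measure_zero _ _ (by simp : volume ({b} : Set ℝ) = 0), add_zero]
      _ ≤ ∑' i : Fin K, ∫⁻ t in Set.Ico (x i.castSucc) (x i.succ),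
            (‖fP t - f t‖₊ : ENNReal) := lintegral_iUnion_le _ _
      _ = ∑ i : Fin K, ∫⁻ t in Set.Ico (x i.castSucc) (x i.succ),
            (‖fP t - f t‖₊ : ENNReal) := tsum_fintype _
      _ ≤ ∑ i : Fin K, V i * ENNReal.ofReal mesh := Finset.sum_le_sum fun i _ => hlint i
      _ = (∑ i : Fin K, V i) * ENNReal.ofReal mesh := by rw [Finset.sum_mul]
      _ = eVariationOn f (Set.Icc a b) * ENNReal.ofReal mesh := by rw [hsum]
  -- conclude
  by_cases hInt : AEStronglyMeasurable (fun t => |fP t - f t|) (volume.restrict (Set.Icc a b))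
  · have heq : ∫ t in Set.Icc a b, |fP t - f t|
        = (∫⁻ t in Set.Icc a b, (‖fP t - f t‖₊ : ENNReal)).toReal := by
      rw [integral_eq_lintegral_of_nonneg_ae (Filter.Eventually.of_forall fun t => abs_nonneg _)
        hInt]
      congr 1
      apply lintegral_congr
      intro t
      rw [← enorm_eq_nnnorm, Real.enorm_eq_ofReal_abs]
    rw [heq]
    have hfin : eVariationOn f (Set.Icc a b) * ENNReal.ofReal mesh ≠ ⊤ :=
      ENNReal.mul_ne_top hVtop ENNReal.ofReal_ne_top
    calc (∫⁻ t in Set.Icc a b, (‖fP t - f t‖₊ : ENNReal)).toReal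
        ≤ (eVariationOn f (Set.Icc a b) * ENNReal.ofReal mesh).toReal :=
          ENNReal.toReal_mono hfin hmain
      _ = (eVariationOn f (Set.Icc a b)).toReal * mesh := by
          rw [ENNReal.toReal_mul, ENNReal.toReal_ofReal hmesh0.le]
  · have : ¬ Integrable (fun t => |fP t - f t|) (volume.restrict (Set.Icc a b)) :=
      fun h => hInt h.1
    rw [integral_undef this]
    positivity
end

section
/- Let T be a bounded linear operator on L¹[0,1] with spectral radius ρ(T) > 1, and assume T maps nonnegative functions to nonnegative functions and is monotone (f ≤ g pointwise a.e. implies Tf ≤ Tg). Then there exists a nonnegative function g ∈ L¹[0,1] with ‖g‖_{L¹} ≤ 1 such that ‖Tⁿ g‖_{L¹} → ∞ as n → ∞. -/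
open MeasureTheory Filter

/-- If `T` is a positive, monotone bounded operator on `L¹[0,1]` with spectral radius
`ρ(T) > 1`, then there exists a nonnegative `g ∈ L¹[0,1]` with `‖g‖ ≤ 1` such that
`‖Tⁿ g‖ → ∞`. -/
theorem stmt9
    (T : Lp ℝ 1 ((volume : Measure ℝ).restrict (Set.Icc (0 : ℝ) 1)) →L[ℝ]
         Lp ℝ 1 ((volume : Measure ℝ).restrict (Set.Icc (0 : ℝ) 1)))
    (hρ : 1 < spectralRadius ℝ T)
    (hpos : ∀ f, 0 ≤ f → 0 ≤ T f)
    (hmono : ∀ f g, f ≤ g → T f ≤ T g) :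
    ∃ g, 0 ≤ g ∧ ‖g‖ ≤ 1 ∧
      Tendsto (fun n : ℕ => ‖(T ^ n) g‖) atTop atTop := by
  classical
  set E := Lp ℝ 1 ((volume : Measure ℝ).restrict (Set.Icc (0 : ℝ) 1)) with hE
  have hsmul : ∀ (c : ℝ), 0 ≤ c → ∀ f : E, 0 ≤ f → 0 ≤ c • f := by
    intro c hc f hf
    rw [← Lp.coeFn_nonneg] at hf ⊢
    filter_upwards [Lp.coeFn_smul c f, hf] with x h1 h2
    rw [h1, Pi.smul_apply, smul_eq_mul]
    exact mul_nonneg hc h2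
  have Tmono : ∀ n : ℕ, Monotone fun f : E => (T ^ n) f := by
    intro n
    induction n with
    | zero => intro a b hab; simpa [pow_zero] using hab
    | succ n ih =>
      intro a b hab
      simp only [pow_succ, ContinuousLinearMap.mul_apply]
      exact ih (hmono a b hab)
  have Tpos : ∀ n : ℕ, ∀ f : E, 0 ≤ f → 0 ≤ (T ^ n) f := by
    intro n f hf
    simpa using Tmono n hf
  obtain ⟨r, hr1, hrρ⟩ := ENNReal.lt_iff_exists_nnreal_btwn.mp hρ
  have hr1' : (1 : ℝ) < r := by exact_mod_cast hr1
  have hr0 : (0 : ℝ) < r := lt_trans one_pos hr1'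
  have hTn : ∀ n : ℕ, ((r : ℝ)) ^ (n + 1) < ‖T ^ (n + 1)‖ := by
    intro n
    have hone : (‖(1 : E →L[ℝ] E)‖₊ : ENNReal) ^ (1 / (n + 1) : ℝ) ≤ 1 := by
      apply ENNReal.rpow_le_one _ (by positivity)
      rw [ENNReal.coe_le_one_iff]
      have h1 : ‖(1 : E →L[ℝ] E)‖ ≤ 1 := ContinuousLinearMap.norm_id_le
      exact_mod_cast h1
    have h1 : spectralRadius ℝ T ≤ (‖T ^ (n + 1)‖₊ : ENNReal) ^ (1 / (n + 1) : ℝ) :=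
      (spectrum.spectralRadius_le_pow_nnnorm_pow_one_div ℝ T n).trans
        (mul_le_of_le_one_right' hone)
    have h2 : (r : ENNReal) < (‖T ^ (n + 1)‖₊ : ENNReal) ^ (1 / (n + 1) : ℝ) :=
      lt_of_lt_of_le hrρ h1
    have h3 := ENNReal.rpow_lt_rpow h2 (by positivity : (0:ℝ) < ((n:ℝ) + 1))
    rw [← ENNReal.rpow_mul, one_div_mul_cancel (by positivity : ((n:ℝ) + 1) ≠ 0),
      ENNReal.rpow_one, show ((n:ℝ) + 1) = ((n + 1 : ℕ) : ℝ) by push_cast; ring,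
      ENNReal.rpow_natCast, ← ENNReal.coe_pow] at h3
    have h5 : r ^ (n+1) < ‖T ^ (n + 1)‖₊ := ENNReal.coe_lt_coe.mp h3
    have := NNReal.coe_lt_coe.mpr h5
    rw [NNReal.coe_pow] at this
    exact this
  -- choose witnesses
  have hf : ∀ n : ℕ, ∃ f : E, 0 ≤ f ∧ ‖f‖ ≤ 1 ∧ ((r:ℝ)) ^ (n + 1) < ‖(T ^ (n + 1)) f‖ := by
    intro n
    obtain ⟨x, hx1, hx2⟩ := (T ^ (n + 1)).exists_lt_apply_of_lt_opNorm (hTn n)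
    have habs : |(T ^ (n + 1)) x| ≤ (T ^ (n + 1)) |x| := by
      have h1 : (T ^ (n + 1)) x ≤ (T ^ (n + 1)) |x| := Tmono (n + 1) (le_abs_self x)
      have h2 : -((T ^ (n + 1)) x) ≤ (T ^ (n + 1)) |x| := by
        have h := Tmono (n + 1) (neg_le_abs x)
        simpa only [map_neg] using h
      exact sup_le h1 h2
    refine ⟨|x|, abs_nonneg x, by rw [norm_abs_eq_norm]; exact hx1.le,
      lt_of_lt_of_le hx2 ?_⟩
    apply norm_le_norm_of_abs_le_abs
    rwa [abs_of_nonneg (Tpos (n + 1) |x| (abs_nonneg x))]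
  choose h hh0 hh1 hh2 using hf
  -- the geometric weight
  set γ : ℝ := (1 + (r:ℝ)⁻¹) / 2 with hγdef
  have hrinv : (r:ℝ)⁻¹ < 1 := inv_lt_one_of_one_lt₀ hr1'
  have hrinv0 : 0 < (r:ℝ)⁻¹ := inv_pos.mpr hr0
  have hγ0 : 0 < γ := by rw [hγdef]; linarith
  have hγ1 : γ < 1 := by rw [hγdef]; linarith
  have hγr : 1 < γ * r := by
    have : (r:ℝ)⁻¹ < γ := by rw [hγdef]; linarith
    calc (1:ℝ) = (r:ℝ)⁻¹ * r := (inv_mul_cancel₀ hr0.ne').symm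
    _ < γ * r := by apply mul_lt_mul_of_pos_right this hr0
  set c : ℕ → ℝ := fun n => (1 - γ) * γ ^ n with hcdef
  have hc0 : ∀ n, 0 ≤ c n := fun n => by
    apply mul_nonneg (by linarith) (pow_nonneg hγ0.le n)
  have hcsum : Summable c := (summable_geometric_of_lt_one hγ0.le hγ1).mul_left _
  have hnormbd : ∀ n, ‖c n • h n‖ ≤ c n := by
    intro n
    rw [norm_smul, Real.norm_eq_abs, abs_of_nonneg (hc0 n)]
    calc c n * ‖h n‖ ≤ c n * 1 := by
          apply mul_le_mul_of_nonneg_left (hh1 n) (hc0 n)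
    _ = c n := mul_one _
  have hsummable : Summable fun n => c n • h n :=
    Summable.of_norm_bounded hcsum hnormbd
  set g : E := ∑' n, c n • h n with hgdef
  have htermpos : ∀ n, 0 ≤ c n • h n := fun n => hsmul (c n) (hc0 n) (h n) (hh0 n)
  have hg0 : 0 ≤ g := tsum_nonneg htermpos
  have hgle : ‖g‖ ≤ 1 := by
    calc ‖g‖ ≤ ∑' n, ‖c n • h n‖ := norm_tsum_le_tsum_norm (hcsum.of_nonneg_of_le
          (fun n => norm_nonneg _) hnormbd)
    _ ≤ ∑' n, c n := Summable.tsum_le_tsum hnormbd (hcsum.of_nonneg_of_le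
          (fun n => norm_nonneg _) hnormbd) hcsum
    _ = (1 - γ) * (1 - γ)⁻¹ := by
          rw [hcdef, tsum_mul_left, tsum_geometric_of_lt_one hγ0.le hγ1]
    _ = 1 := mul_inv_cancel₀ (by linarith)
  refine ⟨g, hg0, hgle, ?_⟩
  have key : ∀ n : ℕ, ((1 - γ) * r) * (γ * r) ^ n ≤ ‖(T ^ (n + 1)) g‖ := by
    intro n
    have hle : c n • h n ≤ g := Summable.le_tsum hsummable n fun j _ => htermpos j
    have h5 := Tmono (n + 1) hle
    have h6 : (T ^ (n + 1)) (c n • h n) = c n • (T ^ (n + 1)) (h n) := map_smul _ _ _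
    have h7 : ‖c n • (T ^ (n + 1)) (h n)‖ ≤ ‖(T ^ (n + 1)) g‖ := by
      apply norm_le_norm_of_abs_le_abs
      rw [abs_of_nonneg (hsmul (c n) (hc0 n) _ (Tpos (n + 1) (h n) (hh0 n))),
        abs_of_nonneg (Tpos (n + 1) g hg0)]
      rw [← h6]; exact h5
    calc ((1 - γ) * r) * (γ * r) ^ n = c n * ((r:ℝ)) ^ (n + 1) := by
          rw [hcdef, mul_pow]; ring
    _ ≤ c n * ‖(T ^ (n + 1)) (h n)‖ := by
          apply mul_le_mul_of_nonneg_left (hh2 n).le (hc0 n)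
    _ = ‖c n • (T ^ (n + 1)) (h n)‖ := by
          rw [norm_smul, Real.norm_eq_abs, abs_of_nonneg (hc0 n)]
    _ ≤ ‖(T ^ (n + 1)) g‖ := h7
  have t1 : Tendsto (fun n : ℕ => ((1 - γ) * r) * (γ * r) ^ n) atTop atTop := by
    apply Tendsto.const_mul_atTop (by nlinarith : (0:ℝ) < (1 - γ) * r)
    exact tendsto_pow_atTop_atTop_of_one_lt hγr
  have t2 : Tendsto (fun n : ℕ => ‖(T ^ (n + 1)) g‖) atTop atTop :=
    tendsto_atTop_mono key t1
  exact (tendsto_add_atTop_iff_nat 1).mp t2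
end

section
/- Fix t > 0, p ∈ [1,∞), and a constant C = ‖h‖_∞ C_B C_W ≥ 0. Let Φ be a map on families ξ = (ξ_x)_{x∈[0,1]} of measurable functions with values in [0,1] satisfying the Lipschitz-type bound: for all u ∈ [0,t] and all inputs f, ∫₀¹ |Φ_x(ξ)(f,u) − Φ_x(ζ)(f,u)|^p dx ≤ C^p ∫₀¹ (∫₀ᵘ |ξ_y(f,s) − ζ_y(f,s)| ds)^p dy. Then for the iterates ξ⁽ⁿ⁾ = Φ(ξ⁽ⁿ⁻¹⁾), ζ⁽ⁿ⁾ = Φ(ζ⁽ⁿ⁻¹⁾) starting from any [0,1]-valued families ξ⁽⁰⁾, ζ⁽⁰⁾ with the convention C replaced by 2‖h‖_∞ C_B C_W in the base case, one has for every n ≥ 1, u ∈ [0,t], and f: ‖ξ_x⁽ⁿ⁾(f,u) − ζ_x⁽ⁿ⁾(f,u)‖_{L^p([0,1],dx)} ≤ (2‖h‖_∞ C_B C_W)ⁿ uⁿ / n!. -/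
open MeasureTheory Set

lemma aux_intOn {f : ℝ → ℝ} {s : Set ℝ} (hm : Measurable f) (M : ℝ)
    (hb : ∀ x, ‖f x‖ ≤ M) (hs : volume s ≠ ⊤) : IntegrableOn f s := by
  haveI : IsFiniteMeasure (volume.restrict s) :=
    ⟨by rwa [Measure.restrict_apply_univ, lt_top_iff_ne_top]⟩
  exact Integrable.mono' (integrable_const M) hm.aestronglyMeasurable (ae_of_all _ hb)

lemma aux_lint_pow (n : ℕ) {u : ℝ} (hu : 0 ≤ u) :
    ∫⁻ s in Icc (0:ℝ) u, ENNReal.ofReal (s ^ n) = ENNReal.ofReal (u ^ (n+1) / (n+1)) := by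
  rw [← ofReal_integral_eq_lintegral_ofReal]
  · congr 1
    rw [MeasureTheory.integral_Icc_eq_integral_Ioc, ← intervalIntegral.integral_of_le hu,
      integral_pow]
    simp
  · exact (continuous_pow n).integrableOn_Icc
  · filter_upwards [ae_restrict_mem measurableSet_Icc] with s hs
    exact pow_nonneg hs.1 n

lemma aux_lint_Kpow (n : ℕ) {u K : ℝ} (hu : 0 ≤ u) (hK : 0 ≤ K) :
    ∫⁻ s in Icc (0:ℝ) u, ENNReal.ofReal (K * s ^ n)
      = ENNReal.ofReal (K * (u ^ (n+1) / (n+1))) := by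
  calc ∫⁻ s in Icc (0:ℝ) u, ENNReal.ofReal (K * s ^ n)
      = ∫⁻ s in Icc (0:ℝ) u, ENNReal.ofReal K * ENNReal.ofReal (s ^ n) := by
        refine lintegral_congr fun s => ?_
        rw [ENNReal.ofReal_mul hK]
    _ = ENNReal.ofReal K * ENNReal.ofReal (u ^ (n+1) / (n+1)) := by
        rw [lintegral_const_mul' _ _ ENNReal.ofReal_ne_top, aux_lint_pow n hu]
    _ = ENNReal.ofReal (K * (u ^ (n+1) / (n+1))) := by
        rw [← ENNReal.ofReal_mul hK]

open ENNReal in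
lemma aux_minkowski {g : ℝ → ℝ → ℝ≥0∞} (hg : Measurable (Function.uncurry g))
    {p : ℝ} (hp : 1 ≤ p) {u K : ℝ} (hu : 0 ≤ u) (hK : 0 ≤ K) (n : ℕ)
    (hyp : ∀ s ∈ Icc (0:ℝ) u, ∫⁻ y in Icc (0:ℝ) 1, g y s ^ p ≤ ENNReal.ofReal (K * s ^ n) ^ p) :
    ∫⁻ y in Icc (0:ℝ) 1, (∫⁻ s in Icc (0:ℝ) u, g y s) ^ p
      ≤ ENNReal.ofReal (K * (u ^ (n+1) / (n+1))) ^ p := by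
  have hp0 : (0:ℝ) < p := lt_of_lt_of_le one_pos hp
  rcases hu.eq_or_lt with h0 | hu0
  · have hz : volume.restrict (Icc (0:ℝ) u) = 0 := by
      rw [Measure.restrict_eq_zero, ← h0]
      simp
    simp [hz, ENNReal.zero_rpow_of_pos hp0]
  have hae : ∀ᵐ s ∂(volume.restrict (Icc (0:ℝ) u)), s ∈ Icc (0:ℝ) u ∧ 0 < s := by
    have h1 : ∀ᵐ s ∂(volume.restrict (Icc (0:ℝ) u)), s ∈ Icc (0:ℝ) u :=
      ae_restrict_mem measurableSet_Icc
    have h2 : ∀ᵐ s ∂(volume.restrict (Icc (0:ℝ) u)), s ≠ 0 := by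
      refine ae_iff.2 ?_
      have h3 : (volume.restrict (Icc (0:ℝ) u)) {0} = 0 := by
        rw [Measure.restrict_apply (measurableSet_singleton 0)]
        exact measure_mono_null Set.inter_subset_left Real.volume_singleton
      simpa using h3
    filter_upwards [h1, h2] with s hs1 hs2
    exact ⟨hs1, lt_of_le_of_ne hs1.1 (Ne.symm hs2)⟩
  rcases hp.eq_or_lt with hp1 | hp1
  · -- p = 1
    subst hp1
    simp only [ENNReal.rpow_one]
    calc ∫⁻ y in Icc (0:ℝ) 1, ∫⁻ s in Icc (0:ℝ) u, g y s
        = ∫⁻ s in Icc (0:ℝ) u, ∫⁻ y in Icc (0:ℝ) 1, g y s :=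
          lintegral_lintegral_swap hg.aemeasurable
      _ ≤ ∫⁻ s in Icc (0:ℝ) u, ENNReal.ofReal (K * s ^ n) := by
          refine lintegral_mono_ae ?_
          filter_upwards [ae_restrict_mem measurableSet_Icc] with s hs
          simpa using hyp s hs
      _ = ENNReal.ofReal (K * (u ^ (n+1) / (n+1))) := aux_lint_Kpow n hu hK
  · -- 1 < p
    set q := Real.conjExponent p with hqdef
    have hpq : p.HolderConjugate q := Real.HolderConjugate.conjExponent hp1
    have hq0 : 0 < q := hpq.symm.pos
    have hpne : p ≠ 0 := hp0.ne'
    have hqp : p / q = p - 1 := hpq.div_conj_eq_sub_one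
    set B := u ^ (n+1) / (n+1) with hBdef
    have hB : 0 < B := by positivity
    set W : ℝ → ℝ≥0∞ := fun s => ENNReal.ofReal (s ^ ((n:ℝ)/q)) with hWdef
    set V : ℝ → ℝ → ℝ≥0∞ := fun y s => ENNReal.ofReal (s ^ (-((n:ℝ)/q))) * g y s with hVdef
    set H : ℝ → ℝ → ℝ≥0∞ := fun y s => ENNReal.ofReal (s ^ (-((n:ℝ)*p)/q)) * g y s ^ p
      with hHdef
    have hW : Measurable W := (measurable_id.pow measurable_const).ennreal_ofReal
    have hHm : Measurable (Function.uncurry H) := by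
      refine Measurable.mul ?_ ?_
      · exact ((measurable_snd.pow measurable_const).ennreal_ofReal)
      · exact hg.pow measurable_const
    have key : ∀ y, (∫⁻ s in Icc (0:ℝ) u, g y s) ^ p
        ≤ ENNReal.ofReal B ^ (p/q) * ∫⁻ s in Icc (0:ℝ) u, H y s := by
      intro y
      have hgy : Measurable fun s => g y s := hg.comp measurable_prodMk_left
      have hVy : Measurable (V y) :=
        ((measurable_id.pow measurable_const).ennreal_ofReal).mul hgy
      have e1 : ∫⁻ s in Icc (0:ℝ) u, g y s = ∫⁻ s in Icc (0:ℝ) u, (W * V y) s := by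
        refine lintegral_congr_ae ?_
        filter_upwards [hae] with s hs
        simp only [hWdef, hVdef, Pi.mul_apply]
        rw [← mul_assoc, ← ENNReal.ofReal_mul (Real.rpow_nonneg hs.1.1 _),
          ← Real.rpow_add hs.2, add_neg_cancel, Real.rpow_zero, ENNReal.ofReal_one, one_mul]
      have holder := ENNReal.lintegral_mul_le_Lp_mul_Lq (volume.restrict (Icc (0:ℝ) u))
        hpq.symm hW.aemeasurable hVy.aemeasurable
      have eW : ∫⁻ s in Icc (0:ℝ) u, W s ^ q = ENNReal.ofReal B := by
        rw [hBdef, ← aux_lint_pow n hu]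
        refine lintegral_congr_ae ?_
        filter_upwards [hae] with s hs
        simp only [hWdef]
        rw [ENNReal.ofReal_rpow_of_nonneg (Real.rpow_nonneg hs.1.1 _) hq0.le]
        congr 1
        rw [← Real.rpow_natCast s n, ← Real.rpow_mul hs.1.1, div_mul_cancel₀ _ hq0.ne']
      have eV : ∫⁻ s in Icc (0:ℝ) u, V y s ^ p = ∫⁻ s in Icc (0:ℝ) u, H y s := by
        refine lintegral_congr_ae ?_
        filter_upwards [hae] with s hs
        simp only [hVdef, hHdef]
        rw [ENNReal.mul_rpow_of_nonneg _ _ hp0.le,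
          ENNReal.ofReal_rpow_of_nonneg (Real.rpow_nonneg hs.1.1 _) hp0.le,
          ← Real.rpow_mul hs.1.1]
        congr 2
        ring
      calc (∫⁻ s in Icc (0:ℝ) u, g y s) ^ p
          = (∫⁻ s in Icc (0:ℝ) u, (W * V y) s) ^ p := by rw [e1]
        _ ≤ ((∫⁻ s in Icc (0:ℝ) u, W s ^ q) ^ (1/q)
              * (∫⁻ s in Icc (0:ℝ) u, V y s ^ p) ^ (1/p)) ^ p :=
            ENNReal.rpow_le_rpow holder hp0.le
        _ = ENNReal.ofReal B ^ (p/q) * ∫⁻ s in Icc (0:ℝ) u, H y s := by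
            rw [eW, eV, ENNReal.mul_rpow_of_nonneg _ _ hp0.le, ← ENNReal.rpow_mul,
              ← ENNReal.rpow_mul, one_div_mul_cancel hpne, ENNReal.rpow_one]
            congr 2
            rw [div_mul_eq_mul_div, one_mul]
    calc ∫⁻ y in Icc (0:ℝ) 1, (∫⁻ s in Icc (0:ℝ) u, g y s) ^ p
        ≤ ∫⁻ y in Icc (0:ℝ) 1, ENNReal.ofReal B ^ (p/q) * ∫⁻ s in Icc (0:ℝ) u, H y s :=
          lintegral_mono key
      _ = ENNReal.ofReal B ^ (p/q)
            * ∫⁻ y in Icc (0:ℝ) 1, ∫⁻ s in Icc (0:ℝ) u, H y s :=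
          lintegral_const_mul' _ _
            (ENNReal.rpow_ne_top_of_nonneg (div_nonneg hp0.le hq0.le) ENNReal.ofReal_ne_top)
      _ = ENNReal.ofReal B ^ (p/q)
            * ∫⁻ s in Icc (0:ℝ) u, ∫⁻ y in Icc (0:ℝ) 1, H y s := by
          rw [lintegral_lintegral_swap hHm.aemeasurable]
      _ ≤ ENNReal.ofReal B ^ (p/q) * ENNReal.ofReal (K^p * (u^(n+1)/(n+1))) := by
          refine mul_le_mul_right ?_ _
          calc ∫⁻ s in Icc (0:ℝ) u, ∫⁻ y in Icc (0:ℝ) 1, H y s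
              ≤ ∫⁻ s in Icc (0:ℝ) u, ENNReal.ofReal (K^p * s^n) := by
                refine lintegral_mono_ae ?_
                filter_upwards [hae] with s hs
                have e3 : ∫⁻ y in Icc (0:ℝ) 1, H y s
                    = ENNReal.ofReal (s ^ (-((n:ℝ)*p)/q)) * ∫⁻ y in Icc (0:ℝ) 1, g y s ^ p :=
                  lintegral_const_mul' _ _ ENNReal.ofReal_ne_top
                rw [e3]
                calc ENNReal.ofReal (s ^ (-((n:ℝ)*p)/q)) * ∫⁻ y in Icc (0:ℝ) 1, g y s ^ p
                    ≤ ENNReal.ofReal (s ^ (-((n:ℝ)*p)/q)) * ENNReal.ofReal (K * s^n) ^ p :=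
                      mul_le_mul_right (hyp s hs.1) _
                  _ = ENNReal.ofReal (K^p * s^n) := by
                      rw [ENNReal.ofReal_rpow_of_nonneg
                          (mul_nonneg hK (pow_nonneg hs.1.1 n)) hp0.le,
                        ← ENNReal.ofReal_mul (Real.rpow_nonneg hs.1.1 _)]
                      congr 1
                      rw [Real.mul_rpow hK (pow_nonneg hs.1.1 n), ← Real.rpow_natCast s n,
                        ← Real.rpow_mul hs.1.1, mul_left_comm, ← Real.rpow_add hs.2]
                      rw [show -((n:ℝ)*p)/q + (n:ℝ)*p = (n:ℝ)*p - (n:ℝ)*p/q by ring]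
                      have hexp : (n:ℝ)*p - (n:ℝ)*p/q = (n:ℝ) := by
                        have h := hqp
                        have : (n:ℝ)*p/q = (n:ℝ)*(p/q) := by ring
                        rw [this, hqp]
                        ring
                      rw [hexp, Real.rpow_natCast]
            _ = ENNReal.ofReal (K^p * (u^(n+1)/(n+1))) :=
                aux_lint_Kpow n hu (Real.rpow_nonneg hK p)
      _ = ENNReal.ofReal (K * (u ^ (n+1) / (n+1))) ^ p := by
          rw [ENNReal.ofReal_rpow_of_nonneg (mul_nonneg hK hB.le) hp0.le,
            ENNReal.ofReal_rpow_of_nonneg hB.le (div_nonneg hp0.le hq0.le),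
            ← ENNReal.ofReal_mul (Real.rpow_nonneg hB.le _)]
          congr 1
          rw [Real.mul_rpow hK hB.le, mul_left_comm, ← hBdef]
          congr 1
          calc B ^ (p/q) * B = B ^ (p/q) * B ^ (1:ℝ) := by rw [Real.rpow_one]
            _ = B ^ (p/q + 1) := (Real.rpow_add hB _ _).symm
            _ = B ^ p := by rw [hqp]; ring_nf

/-- Contraction of the transform-domain operator `Φ`: if `Φ` preserves `[0,1]`-valued
families, preserves measurability, and satisfies the Lipschitz-type bound
`∫₀¹ |Φ_x(ξ)(f,u) − Φ_x(ζ)(f,u)|^p dx ≤ C^p ∫₀¹ (∫₀ᵘ |ξ_y(f,s) − ζ_y(f,s)| ds)^p dy`,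
then the iterates satisfy
`‖ξ_x⁽ⁿ⁾(f,u) − ζ_x⁽ⁿ⁾(f,u)‖_{L^p([0,1],dx)} ≤ (2C)ⁿ uⁿ / n!` for all `n ≥ 1`,
`u ∈ [0,t]` and inputs `f`. -/
theorem stmt13 {ι : Type*} (t C p : ℝ) (ht : 0 < t) (hC : 0 ≤ C) (hp : 1 ≤ p)
    (Φ : (ℝ → ι → ℝ → ℝ) → (ℝ → ι → ℝ → ℝ))
    (hrange : ∀ ξ, (∀ x f u, ξ x f u ∈ Set.Icc (0 : ℝ) 1) →
      ∀ x f u, Φ ξ x f u ∈ Set.Icc (0 : ℝ) 1)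
    (hmeas : ∀ ξ, (∀ x f u, ξ x f u ∈ Set.Icc (0 : ℝ) 1) →
      ∀ f : ι, Measurable (fun q : ℝ × ℝ => Φ ξ q.1 f q.2))
    (hLip : ∀ ξ ζ, (∀ x f u, ξ x f u ∈ Set.Icc (0 : ℝ) 1) →
      (∀ x f u, ζ x f u ∈ Set.Icc (0 : ℝ) 1) →
      ∀ f : ι, ∀ u ∈ Set.Icc (0 : ℝ) t,
        ∫ x in Set.Icc (0 : ℝ) 1, |Φ ξ x f u - Φ ζ x f u| ^ p ≤
          C ^ p * ∫ y in Set.Icc (0 : ℝ) 1,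
            (∫ s in Set.Icc (0 : ℝ) u, |ξ y f s - ζ y f s|) ^ p)
    (ξ0 ζ0 : ℝ → ι → ℝ → ℝ)
    (hξ0 : ∀ x f u, ξ0 x f u ∈ Set.Icc (0 : ℝ) 1)
    (hζ0 : ∀ x f u, ζ0 x f u ∈ Set.Icc (0 : ℝ) 1)
    (hξ0m : ∀ f : ι, Measurable (fun q : ℝ × ℝ => ξ0 q.1 f q.2))
    (hζ0m : ∀ f : ι, Measurable (fun q : ℝ × ℝ => ζ0 q.1 f q.2)) :
    ∀ n : ℕ, 1 ≤ n → ∀ f : ι, ∀ u ∈ Set.Icc (0 : ℝ) t,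
      (∫ x in Set.Icc (0 : ℝ) 1, |Φ^[n] ξ0 x f u - Φ^[n] ζ0 x f u| ^ p) ^ (1 / p) ≤
        (2 * C) ^ n * u ^ n / (n.factorial : ℝ) := by
  have hp0 : (0:ℝ) < p := lt_of_lt_of_le one_pos hp
  have h2C : (0:ℝ) ≤ 2 * C := by linarith
  have Hrξ : ∀ n, ∀ x f u, Φ^[n] ξ0 x f u ∈ Set.Icc (0:ℝ) 1 := by
    intro n
    induction n with
    | zero => simpa using hξ0
    | succ n ih => simp only [Function.iterate_succ_apply']; exact hrange _ ih
  have Hrζ : ∀ n, ∀ x f u, Φ^[n] ζ0 x f u ∈ Set.Icc (0:ℝ) 1 := by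
    intro n
    induction n with
    | zero => simpa using hζ0
    | succ n ih => simp only [Function.iterate_succ_apply']; exact hrange _ ih
  have Hmξ : ∀ n (f : ι), Measurable (fun q : ℝ × ℝ => Φ^[n] ξ0 q.1 f q.2) := by
    intro n
    induction n with
    | zero => simpa using hξ0m
    | succ n ih =>
      intro f
      simp only [Function.iterate_succ_apply']
      exact hmeas _ (Hrξ n) f
  have Hmζ : ∀ n (f : ι), Measurable (fun q : ℝ × ℝ => Φ^[n] ζ0 q.1 f q.2) := by
    intro n
    induction n with
    | zero => simpa using hζ0m
    | succ n ih =>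
      intro f
      simp only [Function.iterate_succ_apply']
      exact hmeas _ (Hrζ n) f
  have habsm : ∀ n (f : ι), Measurable fun q : ℝ × ℝ =>
      |Φ^[n] ξ0 q.1 f q.2 - Φ^[n] ζ0 q.1 f q.2| :=
    fun n f => ((Hmξ n f).sub (Hmζ n f)).abs
  have habs1 : ∀ n x (f : ι) v, |Φ^[n] ξ0 x f v - Φ^[n] ζ0 x f v| ≤ 1 := by
    intro n x f v
    have h1 := Hrξ n x f v
    have h2 := Hrζ n x f v
    rw [Set.mem_Icc] at h1 h2
    rw [abs_sub_le_iff]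
    constructor <;> linarith [h1.1, h1.2, h2.1, h2.2]
  have hIccFin : volume (Set.Icc (0:ℝ) 1) ≠ ⊤ := by simp [Real.volume_Icc]
  have hDp_int : ∀ n (f : ι) (s : ℝ), IntegrableOn
      (fun x => |Φ^[n] ξ0 x f s - Φ^[n] ζ0 x f s| ^ p) (Set.Icc (0:ℝ) 1) := by
    intro n f s
    refine aux_intOn (((habsm n f).comp (measurable_id.prodMk measurable_const)).pow
      measurable_const) 1 (fun x => ?_) hIccFin
    rw [Real.norm_eq_abs, abs_of_nonneg (Real.rpow_nonneg (abs_nonneg _) _)]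
    exact Real.rpow_le_one (abs_nonneg _) (habs1 n x f s) hp0.le
  have hInt_s : ∀ n (f : ι) (y u : ℝ), IntegrableOn
      (fun s => |Φ^[n] ξ0 y f s - Φ^[n] ζ0 y f s|) (Set.Icc (0:ℝ) u) := by
    intro n f y u
    refine aux_intOn ((habsm n f).comp (measurable_const.prodMk measurable_id)) 1
      (fun s => ?_) (by simp [Real.volume_Icc])
    rw [Real.norm_eq_abs, abs_abs]
    exact habs1 n y f s
  have hQ0 : ∀ (f : ι), ∀ s ∈ Set.Icc (0:ℝ) t,
      ∫ x in Set.Icc (0:ℝ) 1, |Φ^[0] ξ0 x f s - Φ^[0] ζ0 x f s| ^ p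
        ≤ ((1:ℝ) * s ^ 0) ^ p := by
    intro f s hs
    have h2 : ∫ x in Set.Icc (0:ℝ) 1, |Φ^[0] ξ0 x f s - Φ^[0] ζ0 x f s| ^ p
        ≤ ∫ _x in Set.Icc (0:ℝ) 1, (1:ℝ) := by
      refine integral_mono (hDp_int 0 f s) (aux_intOn measurable_const 1 (by simp) hIccFin)
        fun x => ?_
      exact Real.rpow_le_one (abs_nonneg _) (habs1 0 x f s) hp0.le
    have h3 : ∫ _x in Set.Icc (0:ℝ) 1, (1:ℝ) = 1 := by
      simp [Real.volume_Icc]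
    rw [one_mul, pow_zero, Real.one_rpow]
    rw [h3] at h2
    exact h2
  have hstep : ∀ (n : ℕ) (K : ℝ), 0 ≤ K →
      (∀ (f : ι), ∀ s ∈ Set.Icc (0:ℝ) t,
        ∫ x in Set.Icc (0:ℝ) 1, |Φ^[n] ξ0 x f s - Φ^[n] ζ0 x f s| ^ p ≤ (K * s ^ n) ^ p) →
      (∀ (f : ι), ∀ u ∈ Set.Icc (0:ℝ) t,
        ∫ x in Set.Icc (0:ℝ) 1, |Φ^[n+1] ξ0 x f u - Φ^[n+1] ζ0 x f u| ^ p
          ≤ (C * (K * (u ^ (n+1) / (n+1)))) ^ p) := by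
    intro n K hK hQ f u hu
    have hBnn : (0:ℝ) ≤ u ^ (n+1) / (n+1) :=
      div_nonneg (pow_nonneg hu.1 _) (by positivity)
    have h1 := hLip (Φ^[n] ξ0) (Φ^[n] ζ0) (Hrξ n) (Hrζ n) f u hu
    have hgm : Measurable (Function.uncurry fun y s =>
        ENNReal.ofReal |Φ^[n] ξ0 y f s - Φ^[n] ζ0 y f s|) := (habsm n f).ennreal_ofReal
    have hyp : ∀ s ∈ Set.Icc (0:ℝ) u,
        ∫⁻ y in Set.Icc (0:ℝ) 1, (ENNReal.ofReal |Φ^[n] ξ0 y f s - Φ^[n] ζ0 y f s|) ^ p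
          ≤ ENNReal.ofReal (K * s ^ n) ^ p := by
      intro s hs
      have hst : s ∈ Set.Icc (0:ℝ) t := ⟨hs.1, hs.2.trans hu.2⟩
      have conv : ∫⁻ y in Set.Icc (0:ℝ) 1,
          (ENNReal.ofReal |Φ^[n] ξ0 y f s - Φ^[n] ζ0 y f s|) ^ p
          = ENNReal.ofReal (∫ y in Set.Icc (0:ℝ) 1,
              |Φ^[n] ξ0 y f s - Φ^[n] ζ0 y f s| ^ p) := by
        rw [ofReal_integral_eq_lintegral_ofReal (hDp_int n f s)
          (ae_of_all _ fun y => Real.rpow_nonneg (abs_nonneg _) p)]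
        exact lintegral_congr fun y => ENNReal.ofReal_rpow_of_nonneg (abs_nonneg _) hp0.le
      rw [conv, ENNReal.ofReal_rpow_of_nonneg (mul_nonneg hK (pow_nonneg hs.1 n)) hp0.le]
      exact ENNReal.ofReal_le_ofReal (hQ f s hst)
    have hmink := aux_minkowski hgm hp hu.1 hK n hyp
    have hIm : Measurable fun y =>
        ∫ s in Set.Icc (0:ℝ) u, |Φ^[n] ξ0 y f s - Φ^[n] ζ0 y f s| :=
      ((habsm n f).stronglyMeasurable.integral_prod_right').measurable
    have hInn : ∀ y, 0 ≤ ∫ s in Set.Icc (0:ℝ) u, |Φ^[n] ξ0 y f s - Φ^[n] ζ0 y f s| :=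
      fun y => integral_nonneg fun s => abs_nonneg _
    have hIu : ∀ y, ∫ s in Set.Icc (0:ℝ) u, |Φ^[n] ξ0 y f s - Φ^[n] ζ0 y f s| ≤ u := by
      intro y
      have h5 : ∫ s in Set.Icc (0:ℝ) u, |Φ^[n] ξ0 y f s - Φ^[n] ζ0 y f s|
          ≤ ∫ _s in Set.Icc (0:ℝ) u, (1:ℝ) :=
        integral_mono (hInt_s n f y u)
          (aux_intOn measurable_const 1 (by simp) (by simp [Real.volume_Icc]))
          fun s => habs1 n y f s
      have h6 : ∫ _s in Set.Icc (0:ℝ) u, (1:ℝ) = u := by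
        simp [Real.volume_Icc, ENNReal.toReal_ofReal hu.1, hu.1]
      rw [h6] at h5
      exact h5
    have hIp_int : IntegrableOn
        (fun y => (∫ s in Set.Icc (0:ℝ) u, |Φ^[n] ξ0 y f s - Φ^[n] ζ0 y f s|) ^ p)
        (Set.Icc (0:ℝ) 1) := by
      refine aux_intOn (hIm.pow measurable_const) (u ^ p) (fun y => ?_) hIccFin
      rw [Real.norm_eq_abs, abs_of_nonneg (Real.rpow_nonneg (hInn y) _)]
      exact Real.rpow_le_rpow (hInn y) (hIu y) hp0.le
    have hreal : ∫ y in Set.Icc (0:ℝ) 1,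
        (∫ s in Set.Icc (0:ℝ) u, |Φ^[n] ξ0 y f s - Φ^[n] ζ0 y f s|) ^ p
        ≤ (K * (u ^ (n+1) / (n+1))) ^ p := by
      have e2 : ENNReal.ofReal (∫ y in Set.Icc (0:ℝ) 1,
          (∫ s in Set.Icc (0:ℝ) u, |Φ^[n] ξ0 y f s - Φ^[n] ζ0 y f s|) ^ p)
          = ∫⁻ y in Set.Icc (0:ℝ) 1,
              (∫⁻ s in Set.Icc (0:ℝ) u,
                ENNReal.ofReal |Φ^[n] ξ0 y f s - Φ^[n] ζ0 y f s|) ^ p := by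
        rw [ofReal_integral_eq_lintegral_ofReal hIp_int
          (ae_of_all _ fun y => Real.rpow_nonneg (hInn y) p)]
        refine lintegral_congr fun y => ?_
        rw [← ENNReal.ofReal_rpow_of_nonneg (hInn y) hp0.le]
        congr 1
        exact ofReal_integral_eq_lintegral_ofReal (hInt_s n f y u)
          (ae_of_all _ fun s => abs_nonneg _)
      have h3 := hmink
      rw [← e2, ENNReal.ofReal_rpow_of_nonneg (mul_nonneg hK hBnn) hp0.le] at h3
      exact (ENNReal.ofReal_le_ofReal_iff
        (Real.rpow_nonneg (mul_nonneg hK hBnn) p)).mp h3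
    simp only [Function.iterate_succ_apply']
    calc ∫ x in Set.Icc (0:ℝ) 1, |Φ (Φ^[n] ξ0) x f u - Φ (Φ^[n] ζ0) x f u| ^ p
        ≤ C ^ p * ∫ y in Set.Icc (0:ℝ) 1,
            (∫ s in Set.Icc (0:ℝ) u, |Φ^[n] ξ0 y f s - Φ^[n] ζ0 y f s|) ^ p := h1
      _ ≤ C ^ p * (K * (u ^ (n+1) / (n+1))) ^ p :=
          mul_le_mul_of_nonneg_left hreal (Real.rpow_nonneg hC p)
      _ = (C * (K * (u ^ (n+1) / (n+1)))) ^ p :=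
          (Real.mul_rpow hC (mul_nonneg hK hBnn)).symm
  have hQn : ∀ n : ℕ, ∀ (f : ι), ∀ s ∈ Set.Icc (0:ℝ) t,
      ∫ x in Set.Icc (0:ℝ) 1, |Φ^[n] ξ0 x f s - Φ^[n] ζ0 x f s| ^ p
        ≤ ((2*C)^n / n.factorial * s ^ n) ^ p := by
    intro n
    induction n with
    | zero => intro f s hs; simpa using hQ0 f s hs
    | succ n ih =>
      intro f s hs
      have hKn : (0:ℝ) ≤ (2*C)^n / n.factorial :=
        div_nonneg (pow_nonneg h2C n) (Nat.cast_nonneg _)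
      have h4 := hstep n ((2*C)^n / n.factorial) hKn ih f s hs
      refine le_trans h4 (Real.rpow_le_rpow
        (mul_nonneg hC (mul_nonneg hKn (div_nonneg (pow_nonneg hs.1 _) (by positivity))))
        ?_ hp0.le)
      have hfac : (((n+1).factorial : ℕ) : ℝ) = ((n:ℝ)+1) * (n.factorial : ℝ) := by
        rw [Nat.factorial_succ]; push_cast; ring
      have hfp : (0:ℝ) < (n.factorial : ℝ) := by exact_mod_cast n.factorial_pos
      have hnum : C * (2*C)^n * s^(n+1) ≤ 2*C*(2*C)^n*s^(n+1) := by
        nlinarith [mul_nonneg (mul_nonneg hC (pow_nonneg h2C n)) (pow_nonneg hs.1 (n+1))]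
      have hfne : ((n.factorial : ℕ) : ℝ) ≠ 0 := ne_of_gt hfp
      have hNne : ((n:ℝ)+1) ≠ 0 := by positivity
      calc C * ((2*C)^n / (n.factorial : ℝ) * (s ^ (n+1) / ((n:ℝ)+1)))
          = (C * (2*C)^n * s^(n+1)) / (((n:ℝ)+1) * (n.factorial : ℝ)) := by
            field_simp
        _ ≤ (2*C*(2*C)^n * s^(n+1)) / (((n:ℝ)+1) * (n.factorial : ℝ)) := by
            apply div_le_div_of_nonneg_right hnum (by positivity)
        _ = (2*C)^(n+1) / (((n+1).factorial : ℕ) : ℝ) * s^(n+1) := by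
            rw [hfac, pow_succ]
            field_simp
            try ring_nf
            try exact Or.inl trivial
  intro n hn f u hu
  have h := hQn n f u hu
  have hX : (0:ℝ) ≤ (2*C)^n / n.factorial * u ^ n :=
    mul_nonneg (div_nonneg (pow_nonneg h2C n) (Nat.cast_nonneg _)) (pow_nonneg hu.1 n)
  calc (∫ x in Set.Icc (0:ℝ) 1, |Φ^[n] ξ0 x f u - Φ^[n] ζ0 x f u| ^ p) ^ (1/p)
      ≤ (((2*C)^n / n.factorial * u ^ n) ^ p) ^ (1/p) :=
        Real.rpow_le_rpow (integral_nonneg fun x => Real.rpow_nonneg (abs_nonneg _) p) h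
          (by positivity)
    _ = (2*C)^n / n.factorial * u ^ n := by
        rw [← Real.rpow_mul hX, mul_one_div_cancel hp0.ne', Real.rpow_one]
    _ = (2*C)^n * u ^ n / n.factorial := by ring
end

section
/- Fix t > 0 and constants C_B, C_W, ‖h‖_∞ ≥ 0 and p ∈ [1,∞). Let Φ be the map on families ξ = (ξ_x)_{x∈[0,1]} of [0,1]-valued functions defined by Φ_x(ξ)(f,u) = γ_x(f,u)·E[exp(∫₀¹ ∫₀ᵘ (ξ_y(f,u−s) − 1) B_{yx} W(y,x) h(s) ds dy)], where γ_x(f,u) ∈ [0,1], 0 ≤ W ≤ C_W, E[B_{yx}] ≤ C_B, 0 ≤ h ≤ ‖h‖_∞. Then Φ is uniformly continuous with respect to the metric d(ξ,ζ) = sup_{u∈[0,t], f} ‖ξ_x(f,u) − ζ_x(f,u)‖_{L^p([0,1],dx)}: in fact d(Φ(ξ),Φ(ζ)) ≤ t‖h‖_∞ C_B C_W · d(ξ,ζ). -/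
open MeasureTheory
open scoped ENNReal NNReal


lemma exp_lip {a b : ℝ} (ha : a ≤ 0) (hb : b ≤ 0) :
    |Real.exp a - Real.exp b| ≤ |a - b| := by
  wlog hab : b ≤ a generalizing a b
  · rw [abs_sub_comm, abs_sub_comm a b]; exact this hb ha (le_of_not_ge hab)
  have h1 : Real.exp (b - a) ≤ 1 := Real.exp_le_one_iff.2 (by linarith)
  have h2 : Real.exp a ≤ 1 := Real.exp_le_one_iff.2 ha
  have h3 : (0:ℝ) < Real.exp a := Real.exp_pos a
  have h4 : Real.exp b = Real.exp a * Real.exp (b - a) := by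
    rw [← Real.exp_add]; ring_nf
  have h5 : (b - a) + 1 ≤ Real.exp (b - a) := Real.add_one_le_exp _
  have hee : Real.exp b ≤ Real.exp a := Real.exp_le_exp.2 hab
  rw [abs_of_nonneg (by linarith), abs_of_nonneg (by linarith)]
  nlinarith



lemma bdd_integrable {α : Type*} [MeasurableSpace α] {μ : Measure α} [IsFiniteMeasure μ]
    {g : α → ℝ} (hg : AEStronglyMeasurable g μ) (c : ℝ)
    (hb : ∀ x, |g x| ≤ c) : Integrable g μ := by
  refine Integrable.mono' (integrable_const c) hg ?_
  exact Filter.Eventually.of_forall fun x => by simpa using hb x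

lemma bdd_integrableOn {s : Set ℝ} (hμ : volume s < ⊤)
    {g : ℝ → ℝ} (hg : AEStronglyMeasurable g (volume.restrict s)) (c : ℝ)
    (hb : ∀ x, |g x| ≤ c) : IntegrableOn g s := by
  have : IsFiniteMeasure (volume.restrict s) :=
    ⟨by rwa [Measure.restrict_apply_univ]⟩
  exact bdd_integrable hg c hb

lemma l1_le_lp {p : ℝ} (hp : 1 ≤ p) {d : ℝ → ℝ}
    (hd : AEStronglyMeasurable d (volume.restrict (Set.Icc (0:ℝ) 1)))
    (h0 : ∀ y, 0 ≤ d y) (h1 : ∀ y, d y ≤ 1) :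
    ∫ y in Set.Icc (0:ℝ) 1, d y ≤ (∫ y in Set.Icc (0:ℝ) 1, d y ^ p) ^ (1/p) := by
  have hp0 : (0:ℝ) < p := by linarith
  have hvol : volume (Set.Icc (0:ℝ) 1) = 1 := by simp
  have hdint : IntegrableOn d (Set.Icc (0:ℝ) 1) :=
    bdd_integrableOn (by simp) hd 1 (fun x => abs_le.2 ⟨by linarith [h0 x], h1 x⟩)
  have hdpint : IntegrableOn (fun y => d y ^ p) (Set.Icc (0:ℝ) 1) := by
    refine bdd_integrableOn (by simp) ?_ 1 (fun x => abs_le.2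
      ⟨by have := Real.rpow_nonneg (h0 x) p; linarith,
        Real.rpow_le_one (h0 x) (h1 x) hp0.le⟩)
    exact (hd.aemeasurable.pow_const p).aestronglyMeasurable
  have hjensen := (convexOn_rpow hp).map_set_average_le
    (f := d) (t := Set.Icc (0:ℝ) 1) (μ := volume)
    (fun x hx => (Real.continuousAt_rpow_const x p (Or.inr hp0.le)).continuousWithinAt)
    isClosed_Ici (by simp [hvol]) (by simp [hvol])
    (Filter.Eventually.of_forall fun y => h0 y) hdint hdpint
  rw [setAverage_eq, setAverage_eq, measureReal_def, hvol] at hjensen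
  simp only [ENNReal.toReal_one, inv_one, one_smul] at hjensen
  have h3 : (0:ℝ) ≤ ∫ y in Set.Icc (0:ℝ) 1, d y :=
    setIntegral_nonneg measurableSet_Icc fun y _ => h0 y
  calc ∫ y in Set.Icc (0:ℝ) 1, d y
      = ((∫ y in Set.Icc (0:ℝ) 1, d y) ^ p) ^ (1/p) := by
        rw [← Real.rpow_mul h3, mul_one_div_cancel hp0.ne', Real.rpow_one]
    _ ≤ (∫ y in Set.Icc (0:ℝ) 1, d y ^ p) ^ (1/p) :=
        Real.rpow_le_rpow (by positivity) hjensen (by positivity)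


section
variable {ι Ω : Type*} [MeasurableSpace Ω] (P : Measure Ω) [IsProbabilityMeasure P]

lemma stepA (t p CB CW hsup : ℝ) (ht : 0 < t) (hp : 1 ≤ p)
    (hCB : 0 ≤ CB) (hCW : 0 ≤ CW) (hhs : 0 ≤ hsup)
    (W : ℝ → ℝ → ℝ) (B : ℝ → ℝ → Ω → ℝ) (h : ℝ → ℝ)
    (hW : ∀ y x, W y x ∈ Set.Icc (0 : ℝ) CW)
    (hh : ∀ s, h s ∈ Set.Icc (0 : ℝ) hsup)
    (hB0 : ∀ y x ω, 0 ≤ B y x ω)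
    (hBint : ∀ y x, Integrable (B y x) P)
    (hBmean : ∀ y x, ∫ ω, B y x ω ∂P ≤ CB)
    (hBmeas : ∀ x, Measurable (fun q : ℝ × Ω => B q.1 x q.2))
    (hWmeas : Measurable (Function.uncurry W))
    (hhmeas : Measurable h)
    (ξ ζ : ℝ → ι → ℝ → ℝ)
    (hξ : ∀ x f u, ξ x f u ∈ Set.Icc (0 : ℝ) 1)
    (hζ : ∀ x f u, ζ x f u ∈ Set.Icc (0 : ℝ) 1)
    (hξm : ∀ f : ι, Measurable (fun q : ℝ × ℝ => ξ q.1 f q.2))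
    (hζm : ∀ f : ι, Measurable (fun q : ℝ × ℝ => ζ q.1 f q.2))
    (M : ℝ) (hM0 : 0 ≤ M)
    (hM : ∀ f : ι, ∀ u ∈ Set.Icc (0 : ℝ) t,
      (∫ x in Set.Icc (0 : ℝ) 1, |ξ x f u - ζ x f u| ^ p) ^ (1 / p) ≤ M)
    (f : ι) (u : ℝ) (hu0 : 0 ≤ u) (hut : u ≤ t) (x : ℝ) :
    |(∫ ω, Real.exp (∫ y in Set.Icc (0 : ℝ) 1, ∫ s in Set.Icc (0 : ℝ) u,
        (ξ y f (u - s) - 1) * (B y x ω * (W y x * h s))) ∂P) -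
     (∫ ω, Real.exp (∫ y in Set.Icc (0 : ℝ) 1, ∫ s in Set.Icc (0 : ℝ) u,
        (ζ y f (u - s) - 1) * (B y x ω * (W y x * h s))) ∂P)| ≤ t * hsup * CB * CW * M := by
  classical
  set A1 : Ω → ℝ := fun ω => ∫ y in Set.Icc (0:ℝ) 1, ∫ s in Set.Icc (0:ℝ) u,
      (ξ y f (u - s) - 1) * (B y x ω * (W y x * h s)) with hA1def
  set A2 : Ω → ℝ := fun ω => ∫ y in Set.Icc (0:ℝ) 1, ∫ s in Set.Icc (0:ℝ) u,
      (ζ y f (u - s) - 1) * (B y x ω * (W y x * h s)) with hA2def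
  -- basic positivity facts
  have hk0 : ∀ y s ω, 0 ≤ B y x ω * (W y x * h s) := fun y s ω =>
    mul_nonneg (hB0 _ _ _) (mul_nonneg (hW _ _).1 (hh _).1)
  have hbd : ∀ (c : ℝ), |c| ≤ 1 → ∀ y s (ω : Ω),
      |c * (B y x ω * (W y x * h s))| ≤ B y x ω * (CW * hsup) := by
    intro c hc y s ω
    rw [abs_mul, abs_of_nonneg (hk0 y s ω)]
    calc |c| * (B y x ω * (W y x * h s)) ≤ 1 * (B y x ω * (W y x * h s)) :=
          mul_le_mul_of_nonneg_right hc (hk0 y s ω)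
      _ ≤ B y x ω * (CW * hsup) := by
          rw [one_mul]
          exact mul_le_mul_of_nonneg_left
            (mul_le_mul (hW y x).2 (hh s).2 (hh s).1 hCW) (hB0 _ _ _)
  have habs1 : ∀ y (v : ℝ), |ξ y f v - 1| ≤ 1 := fun y v =>
    abs_le.2 ⟨by linarith [(hξ y f v).1], by linarith [(hξ y f v).2]⟩
  have habs2 : ∀ y (v : ℝ), |ζ y f v - 1| ≤ 1 := fun y v =>
    abs_le.2 ⟨by linarith [(hζ y f v).1], by linarith [(hζ y f v).2]⟩
  have habsd : ∀ y (v : ℝ), |ξ y f v - ζ y f v| ≤ 1 := fun y v =>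
    abs_le.2 ⟨by linarith [(hξ y f v).1, (hζ y f v).2], by linarith [(hξ y f v).2, (hζ y f v).1]⟩
  -- measurability
  have mB : Measurable fun q : (ℝ × Ω) × ℝ => B q.1.1 x q.1.2 :=
    (hBmeas x).comp ((measurable_fst.fst).prodMk measurable_fst.snd)
  have mW : Measurable fun q : (ℝ × Ω) × ℝ => W q.1.1 x :=
    hWmeas.comp ((measurable_fst.fst).prodMk measurable_const)
  have mh' : Measurable fun q : (ℝ × Ω) × ℝ => h q.2 := hhmeas.comp measurable_snd
  have mξ : Measurable fun q : (ℝ × Ω) × ℝ => ξ q.1.1 f (u - q.2) :=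
    (hξm f).comp ((measurable_fst.fst).prodMk (measurable_const.sub measurable_snd))
  have mζ : Measurable fun q : (ℝ × Ω) × ℝ => ζ q.1.1 f (u - q.2) :=
    (hζm f).comp ((measurable_fst.fst).prodMk (measurable_const.sub measurable_snd))
  have mg1 : Measurable fun q : (ℝ × Ω) × ℝ =>
      (ξ q.1.1 f (u - q.2) - 1) * (B q.1.1 x q.1.2 * (W q.1.1 x * h q.2)) :=
    (mξ.sub measurable_const).mul (mB.mul (mW.mul mh'))
  have mg2 : Measurable fun q : (ℝ × Ω) × ℝ =>
      (ζ q.1.1 f (u - q.2) - 1) * (B q.1.1 x q.1.2 * (W q.1.1 x * h q.2)) :=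
    (mζ.sub measurable_const).mul (mB.mul (mW.mul mh'))
  have mF1 : StronglyMeasurable fun q : ℝ × Ω => ∫ s in Set.Icc (0:ℝ) u,
      (ξ q.1 f (u - s) - 1) * (B q.1 x q.2 * (W q.1 x * h s)) :=
    mg1.stronglyMeasurable.integral_prod_right'
  have mF2 : StronglyMeasurable fun q : ℝ × Ω => ∫ s in Set.Icc (0:ℝ) u,
      (ζ q.1 f (u - s) - 1) * (B q.1 x q.2 * (W q.1 x * h s)) :=
    mg2.stronglyMeasurable.integral_prod_right'
  have mA1 : StronglyMeasurable A1 :=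
    (mF1.comp_measurable measurable_swap).integral_prod_right'
  have mA2 : StronglyMeasurable A2 :=
    (mF2.comp_measurable measurable_swap).integral_prod_right'

  set L : Ω → ℝ≥0∞ := fun ω => ∫⁻ y in Set.Icc (0:ℝ) 1, ∫⁻ s in Set.Icc (0:ℝ) u,
      ENNReal.ofReal (|ξ y f (u - s) - ζ y f (u - s)| * (B y x ω * (W y x * h s))) with hLdef
  have mgd : Measurable fun q : (ℝ × Ω) × ℝ =>
      |ξ q.1.1 f (u - q.2) - ζ q.1.1 f (u - q.2)| * (B q.1.1 x q.1.2 * (W q.1.1 x * h q.2)) :=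
    ((mξ.sub mζ).abs).mul (mB.mul (mW.mul mh'))
  have mLin : Measurable fun q : (Ω × ℝ) × ℝ =>
      ENNReal.ofReal (|ξ q.1.2 f (u - q.2) - ζ q.1.2 f (u - q.2)| *
        (B q.1.2 x q.1.1 * (W q.1.2 x * h q.2))) := by
    have : Measurable fun q : (Ω × ℝ) × ℝ => ((q.1.2, q.1.1), q.2) :=
      ((measurable_fst.snd).prodMk measurable_fst.fst).prodMk measurable_snd
    exact (mgd.comp this).ennreal_ofReal
  have mLF : Measurable fun q : Ω × ℝ => ∫⁻ s in Set.Icc (0:ℝ) u,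
      ENNReal.ofReal (|ξ q.2 f (u - s) - ζ q.2 f (u - s)| *
        (B q.2 x q.1 * (W q.2 x * h s))) := mLin.lintegral_prod_right'
  have mL : Measurable L := mLF.lintegral_prod_right'
  have claim1 : ∀ ω, |Real.exp (A1 ω) - Real.exp (A2 ω)| ≤ (min 1 (L ω)).toReal := by
    intro ω
    have hA1np : A1 ω ≤ 0 := integral_nonpos fun y => integral_nonpos fun s =>
      mul_nonpos_of_nonpos_of_nonneg (by linarith [(hξ y f (u - s)).2]) (hk0 y s ω)
    have hA2np : A2 ω ≤ 0 := integral_nonpos fun y => integral_nonpos fun s =>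
      mul_nonpos_of_nonpos_of_nonneg (by linarith [(hζ y f (u - s)).2]) (hk0 y s ω)
    have hb1 : |Real.exp (A1 ω) - Real.exp (A2 ω)| ≤ 1 := by
      have e1 := Real.exp_pos (A1 ω); have e2 := Real.exp_pos (A2 ω)
      have e3 := Real.exp_le_one_iff.2 hA1np; have e4 := Real.exp_le_one_iff.2 hA2np
      rw [abs_sub_le_iff]; constructor <;> linarith
    by_cases hL : L ω = ⊤
    · simpa [hL] using hb1
    · rw [ENNReal.toReal_min (by simp) hL]
      refine le_min hb1 (le_trans (exp_lip hA1np hA2np) ?_)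
      -- inner integrability in s
      have msect : ∀ (y : ℝ), Measurable fun s : ℝ => ((y, ω), s) :=
        fun y => measurable_const.prodMk measurable_id
      have mI1 : ∀ y, IntegrableOn
          (fun s => (ξ y f (u - s) - 1) * (B y x ω * (W y x * h s))) (Set.Icc 0 u) :=
        fun y => bdd_integrableOn (by simp) ((mg1.comp (msect y)).aestronglyMeasurable) _
          (fun s => hbd _ (habs1 y _) y s ω)
      have mI2 : ∀ y, IntegrableOn
          (fun s => (ζ y f (u - s) - 1) * (B y x ω * (W y x * h s))) (Set.Icc 0 u) :=
        fun y => bdd_integrableOn (by simp) ((mg2.comp (msect y)).aestronglyMeasurable) _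
          (fun s => hbd _ (habs2 y _) y s ω)
      have mIφ : ∀ y, IntegrableOn
          (fun s => |ξ y f (u - s) - ζ y f (u - s)| * (B y x ω * (W y x * h s))) (Set.Icc 0 u) :=
        fun y => bdd_integrableOn (by simp) ((mgd.comp (msect y)).aestronglyMeasurable) _
          (fun s => hbd _ (by rw [abs_abs]; exact habsd y _) y s ω)
      set φ : ℝ → ℝ := fun y => ∫ s in Set.Icc (0:ℝ) u,
        |ξ y f (u - s) - ζ y f (u - s)| * (B y x ω * (W y x * h s)) with hφdef
      have hφ0 : ∀ y, 0 ≤ φ y := fun y =>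
        setIntegral_nonneg measurableSet_Icc fun s _ => mul_nonneg (abs_nonneg _) (hk0 y s ω)
      have hφmeas : AEStronglyMeasurable φ (volume.restrict (Set.Icc (0:ℝ) 1)) := by
        have hFd : StronglyMeasurable fun q : ℝ × Ω => ∫ s in Set.Icc (0:ℝ) u,
            |ξ q.1 f (u - s) - ζ q.1 f (u - s)| * (B q.1 x q.2 * (W q.1 x * h s)) :=
          mgd.stronglyMeasurable.integral_prod_right'
        exact (hFd.comp_measurable (measurable_id.prodMk measurable_const)).aestronglyMeasurable
      have hLω : L ω = ∫⁻ y in Set.Icc (0:ℝ) 1, ENNReal.ofReal (φ y) := by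
        refine lintegral_congr fun y => ?_
        exact (ofReal_integral_eq_lintegral_ofReal (mIφ y)
          (Filter.Eventually.of_forall fun s => mul_nonneg (abs_nonneg _) (hk0 y s ω))).symm
      have hφint : IntegrableOn φ (Set.Icc (0:ℝ) 1) := by
        refine ⟨hφmeas, ?_⟩
        rw [hasFiniteIntegral_iff_norm]
        have : (∫⁻ y in Set.Icc (0:ℝ) 1, ENNReal.ofReal ‖φ y‖) =
            ∫⁻ y in Set.Icc (0:ℝ) 1, ENNReal.ofReal (φ y) :=
          lintegral_congr fun y => by rw [Real.norm_eq_abs, abs_of_nonneg (hφ0 y)]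
        rw [this, ← hLω]
        exact lt_top_iff_ne_top.2 hL
      have hφeq : ∫ y in Set.Icc (0:ℝ) 1, φ y = (L ω).toReal := by
        have h2 := ofReal_integral_eq_lintegral_ofReal hφint
          (Filter.Eventually.of_forall hφ0)
        rw [← hLω] at h2
        rw [← h2, ENNReal.toReal_ofReal (setIntegral_nonneg measurableSet_Icc fun y _ => hφ0 y)]
      set F1 : ℝ → ℝ := fun y => ∫ s in Set.Icc (0:ℝ) u,
        (ξ y f (u - s) - 1) * (B y x ω * (W y x * h s)) with hF1def
      set F2 : ℝ → ℝ := fun y => ∫ s in Set.Icc (0:ℝ) u,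
        (ζ y f (u - s) - 1) * (B y x ω * (W y x * h s)) with hF2def
      have hA1eq : A1 ω = ∫ y in Set.Icc (0:ℝ) 1, F1 y := rfl
      have hA2eq : A2 ω = ∫ y in Set.Icc (0:ℝ) 1, F2 y := rfl
      have hFG : ∀ y, F1 y - F2 y = ∫ s in Set.Icc (0:ℝ) u,
          (ξ y f (u - s) - ζ y f (u - s)) * (B y x ω * (W y x * h s)) := by
        intro y
        simp only [hF1def, hF2def]
        rw [← integral_sub (mI1 y) (mI2 y)]
        congr 1; funext s; ring
      have habsFG : ∀ y, |F1 y - F2 y| ≤ φ y := by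
        intro y
        rw [hFG y]
        have h1 := norm_integral_le_integral_norm (μ := volume.restrict (Set.Icc (0:ℝ) u))
          (fun s => (ξ y f (u - s) - ζ y f (u - s)) * (B y x ω * (W y x * h s)))
        simp only [Real.norm_eq_abs] at h1
        refine h1.trans (le_of_eq ?_)
        rw [hφdef]
        refine integral_congr_ae (Filter.Eventually.of_forall fun s => ?_)
        beta_reduce
        rw [abs_mul, abs_of_nonneg (hk0 y s ω)]
      have mF1y : AEStronglyMeasurable F1 (volume.restrict (Set.Icc (0:ℝ) 1)) :=
        (mF1.comp_measurable (measurable_id.prodMk measurable_const)).aestronglyMeasurable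
      have mF2y : AEStronglyMeasurable F2 (volume.restrict (Set.Icc (0:ℝ) 1)) :=
        (mF2.comp_measurable (measurable_id.prodMk measurable_const)).aestronglyMeasurable
      have hFGint : IntegrableOn (fun y => F1 y - F2 y) (Set.Icc (0:ℝ) 1) :=
        Integrable.mono' hφint (mF1y.sub mF2y)
          (Filter.Eventually.of_forall fun y => by
            rw [Real.norm_eq_abs]; exact habsFG y)
      by_cases hI1 : IntegrableOn F1 (Set.Icc (0:ℝ) 1) volume
      · have hI2 : IntegrableOn F2 (Set.Icc (0:ℝ) 1) volume := by
          have heq : F2 = fun y => F1 y - (F1 y - F2 y) := by funext y; ring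
          rw [heq]; exact hI1.sub hFGint
        have hsub : A1 ω - A2 ω = ∫ y in Set.Icc (0:ℝ) 1, (F1 y - F2 y) := by
          rw [hA1eq, hA2eq, integral_sub hI1 hI2]
        rw [hsub]
        have h2 := norm_integral_le_integral_norm (μ := volume.restrict (Set.Icc (0:ℝ) 1))
          (fun y => F1 y - F2 y)
        simp only [Real.norm_eq_abs] at h2
        refine h2.trans ?_
        rw [← hφeq]
        exact integral_mono hFGint.abs hφint habsFG
      · have hI2 : ¬ IntegrableOn F2 (Set.Icc (0:ℝ) 1) volume := by
          intro hI2
          apply hI1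
          have heq : F1 = fun y => (F1 y - F2 y) + F2 y := by funext y; ring
          rw [heq]; exact hFGint.add hI2
        have hz1 : A1 ω = 0 := by rw [hA1eq]; exact integral_undef hI1
        have hz2 : A2 ω = 0 := by rw [hA2eq]; exact integral_undef hI2
        rw [hz1, hz2, sub_self, abs_zero]
        exact ENNReal.toReal_nonneg
  -- global nonpositivity
  have hA1np : ∀ ω, A1 ω ≤ 0 := fun ω => integral_nonpos fun y => integral_nonpos fun s =>
    mul_nonpos_of_nonpos_of_nonneg (by linarith [(hξ y f (u - s)).2]) (hk0 y s ω)
  have hA2np : ∀ ω, A2 ω ≤ 0 := fun ω => integral_nonpos fun y => integral_nonpos fun s =>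
    mul_nonpos_of_nonpos_of_nonneg (by linarith [(hζ y f (u - s)).2]) (hk0 y s ω)
  have hexp1 : Integrable (fun ω => Real.exp (A1 ω)) P :=
    bdd_integrable (Real.continuous_exp.comp_stronglyMeasurable mA1).aestronglyMeasurable 1
      (fun ω => by rw [abs_of_nonneg (Real.exp_pos _).le]; exact Real.exp_le_one_iff.2 (hA1np ω))
  have hexp2 : Integrable (fun ω => Real.exp (A2 ω)) P :=
    bdd_integrable (Real.continuous_exp.comp_stronglyMeasurable mA2).aestronglyMeasurable 1
      (fun ω => by rw [abs_of_nonneg (Real.exp_pos _).le]; exact Real.exp_le_one_iff.2 (hA2np ω))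
  have hminmeas : Measurable fun ω => min 1 (L ω) := measurable_const.min mL
  have hmin_int : Integrable (fun ω => (min 1 (L ω)).toReal) P :=
    bdd_integrable hminmeas.ennreal_toReal.aestronglyMeasurable 1
      (fun ω => by
        rw [abs_of_nonneg ENNReal.toReal_nonneg]
        simpa using ENNReal.toReal_mono (by simp) (min_le_left 1 (L ω)))
  -- the lintegral bound
  have hlb : ∫⁻ ω, L ω ∂P ≤ ENNReal.ofReal (t * hsup * CB * CW * M) := by
    set c : ℝ → ℝ → ℝ≥0∞ := fun y s =>
      ENNReal.ofReal (|ξ y f (u - s) - ζ y f (u - s)| * (W y x * h s)) with hcdef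
    have hnn : ∀ y s, 0 ≤ |ξ y f (u - s) - ζ y f (u - s)| * (W y x * h s) :=
      fun y s => mul_nonneg (abs_nonneg _) (mul_nonneg (hW _ _).1 (hh _).1)
    have hsplit : ∀ ω y s,
        ENNReal.ofReal (|ξ y f (u - s) - ζ y f (u - s)| * (B y x ω * (W y x * h s))) =
        c y s * ENNReal.ofReal (B y x ω) := by
      intro ω y s
      rw [hcdef, ← ENNReal.ofReal_mul (hnn y s)]
      congr 1; ring
    have mc : Measurable fun q : ℝ × ℝ => c q.1 q.2 := by
      apply Measurable.ennreal_ofReal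
      exact (((hξm f).comp (measurable_fst.prodMk (measurable_const.sub measurable_snd))).sub
        ((hζm f).comp (measurable_fst.prodMk (measurable_const.sub measurable_snd)))).abs.mul
        ((hWmeas.comp (measurable_fst.prodMk measurable_const)).mul
          (hhmeas.comp measurable_snd))
    set G : ℝ → ℝ≥0∞ := fun y => ∫⁻ s in Set.Icc (0:ℝ) u, c y s with hGdef
    have mG : Measurable G := mc.lintegral_prod_right'
    have hBsec : ∀ y, Measurable fun ω => B y x ω :=
      fun y => (hBmeas x).comp (measurable_const.prodMk measurable_id)
    have hLrw : ∀ ω, L ω = ∫⁻ y in Set.Icc (0:ℝ) 1, G y * ENNReal.ofReal (B y x ω) := by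
      intro ω
      rw [hLdef]
      refine lintegral_congr fun y => ?_
      rw [hGdef]
      calc (∫⁻ s in Set.Icc (0:ℝ) u,
            ENNReal.ofReal (|ξ y f (u - s) - ζ y f (u - s)| * (B y x ω * (W y x * h s))))
          = ∫⁻ s in Set.Icc (0:ℝ) u, c y s * ENNReal.ofReal (B y x ω) :=
            lintegral_congr fun s => hsplit ω y s
        _ = (∫⁻ s in Set.Icc (0:ℝ) u, c y s) * ENNReal.ofReal (B y x ω) :=
            lintegral_mul_const' _ _ ENNReal.ofReal_ne_top
    have hswap : ∫⁻ ω, L ω ∂P =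
        ∫⁻ y in Set.Icc (0:ℝ) 1, ∫⁻ ω, G y * ENNReal.ofReal (B y x ω) ∂P := by
      rw [lintegral_congr hLrw]
      exact lintegral_lintegral_swap
        (((mG.comp measurable_snd).mul
          (((hBmeas x).comp (measurable_snd.prodMk measurable_fst)).ennreal_ofReal)).aemeasurable)
    rw [hswap]
    have hinner : ∀ y, (∫⁻ ω, G y * ENNReal.ofReal (B y x ω) ∂P) ≤ G y * ENNReal.ofReal CB := by
      intro y
      rw [lintegral_const_mul'' (G y) ((hBsec y).ennreal_ofReal.aemeasurable)]
      apply mul_le_mul_right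
      rw [← ofReal_integral_eq_lintegral_ofReal (hBint y x)
        (Filter.Eventually.of_forall (hB0 y x))]
      exact ENNReal.ofReal_le_ofReal (hBmean y x)
    have hcle : ∀ y s, c y s ≤ ENNReal.ofReal (CW * hsup) *
        ENNReal.ofReal (|ξ y f (u - s) - ζ y f (u - s)|) := by
      intro y s
      rw [← ENNReal.ofReal_mul (mul_nonneg hCW hhs), hcdef]
      apply ENNReal.ofReal_le_ofReal
      calc |ξ y f (u - s) - ζ y f (u - s)| * (W y x * h s)
          ≤ |ξ y f (u - s) - ζ y f (u - s)| * (CW * hsup) :=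
            mul_le_mul_of_nonneg_left
              (mul_le_mul (hW y x).2 (hh s).2 (hh s).1 hCW) (abs_nonneg _)
        _ = CW * hsup * |ξ y f (u - s) - ζ y f (u - s)| := mul_comm _ _
    have hGle : ∀ y, G y ≤ ENNReal.ofReal (CW * hsup) *
        ∫⁻ s in Set.Icc (0:ℝ) u, ENNReal.ofReal (|ξ y f (u - s) - ζ y f (u - s)|) := by
      intro y
      rw [hGdef, ← lintegral_const_mul' _ _ ENNReal.ofReal_ne_top]
      exact lintegral_mono (hcle y)
    set J : ℝ≥0∞ := ∫⁻ y in Set.Icc (0:ℝ) 1, ∫⁻ s in Set.Icc (0:ℝ) u,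
      ENNReal.ofReal (|ξ y f (u - s) - ζ y f (u - s)|) with hJdef
    have me' : Measurable fun q : ℝ × ℝ =>
        ENNReal.ofReal (|ξ q.1 f (u - q.2) - ζ q.1 f (u - q.2)|) :=
      (((hξm f).comp (measurable_fst.prodMk (measurable_const.sub measurable_snd))).sub
        ((hζm f).comp (measurable_fst.prodMk (measurable_const.sub measurable_snd)))).abs.ennreal_ofReal
    have hJswap : J = ∫⁻ s in Set.Icc (0:ℝ) u, ∫⁻ y in Set.Icc (0:ℝ) 1,
        ENNReal.ofReal (|ξ y f (u - s) - ζ y f (u - s)|) := by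
      rw [hJdef]
      exact lintegral_lintegral_swap me'.aemeasurable
    have hinner2 : ∀ s ∈ Set.Icc (0:ℝ) u, (∫⁻ y in Set.Icc (0:ℝ) 1,
        ENNReal.ofReal (|ξ y f (u - s) - ζ y f (u - s)|)) ≤ ENNReal.ofReal M := by
      intro s hs
      have hdm : Measurable fun y => ξ y f (u - s) - ζ y f (u - s) :=
        ((hξm f).comp (measurable_id.prodMk measurable_const)).sub
          ((hζm f).comp (measurable_id.prodMk measurable_const))
      have hdint : IntegrableOn (fun y => |ξ y f (u - s) - ζ y f (u - s)|)
          (Set.Icc (0:ℝ) 1) := bdd_integrableOn (by simp)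
        hdm.abs.aestronglyMeasurable 1 (fun y => by rw [abs_abs]; exact habsd y _)
      rw [← ofReal_integral_eq_lintegral_ofReal hdint
        (Filter.Eventually.of_forall fun y => abs_nonneg _)]
      apply ENNReal.ofReal_le_ofReal
      refine (l1_le_lp hp hdm.abs.aestronglyMeasurable
        (fun y => abs_nonneg _) (fun y => habsd y _)).trans ?_
      exact hM f (u - s) ⟨by linarith [hs.2], by linarith [hs.1]⟩
    have hJle : J ≤ ENNReal.ofReal M * ENNReal.ofReal t := by
      rw [hJswap]
      calc (∫⁻ s in Set.Icc (0:ℝ) u, ∫⁻ y in Set.Icc (0:ℝ) 1,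
            ENNReal.ofReal (|ξ y f (u - s) - ζ y f (u - s)|))
          ≤ ∫⁻ _ in Set.Icc (0:ℝ) u, ENNReal.ofReal M :=
            setLIntegral_mono measurable_const hinner2
        _ = ENNReal.ofReal M * volume (Set.Icc (0:ℝ) u) := by
            rw [setLIntegral_const]
        _ ≤ ENNReal.ofReal M * ENNReal.ofReal t := by
            apply mul_le_mul_right
            rw [Real.volume_Icc]
            exact ENNReal.ofReal_le_ofReal (by linarith)
    calc (∫⁻ y in Set.Icc (0:ℝ) 1, ∫⁻ ω, G y * ENNReal.ofReal (B y x ω) ∂P)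
        ≤ ∫⁻ y in Set.Icc (0:ℝ) 1, G y * ENNReal.ofReal CB := lintegral_mono hinner
      _ = (∫⁻ y in Set.Icc (0:ℝ) 1, G y) * ENNReal.ofReal CB :=
          lintegral_mul_const' _ _ ENNReal.ofReal_ne_top
      _ ≤ (ENNReal.ofReal (CW * hsup) * J) * ENNReal.ofReal CB := by
          apply mul_le_mul_left
          calc (∫⁻ y in Set.Icc (0:ℝ) 1, G y)
              ≤ ∫⁻ y in Set.Icc (0:ℝ) 1, ENNReal.ofReal (CW * hsup) *
                  ∫⁻ s in Set.Icc (0:ℝ) u,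
                    ENNReal.ofReal (|ξ y f (u - s) - ζ y f (u - s)|) :=
                lintegral_mono hGle
            _ = ENNReal.ofReal (CW * hsup) * J := by
                rw [hJdef]
                exact lintegral_const_mul' _ _ ENNReal.ofReal_ne_top
      _ ≤ (ENNReal.ofReal (CW * hsup) * (ENNReal.ofReal M * ENNReal.ofReal t)) *
            ENNReal.ofReal CB := by
          apply mul_le_mul_left
          exact mul_le_mul_right hJle _
      _ = ENNReal.ofReal (t * hsup * CB * CW * M) := by
          rw [← ENNReal.ofReal_mul hM0, ← ENNReal.ofReal_mul (mul_nonneg hCW hhs),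
            ← ENNReal.ofReal_mul (by positivity)]
          congr 1
          ring
  -- conclude
  have hfin : (∫⁻ ω, min 1 (L ω) ∂P) ≤ ENNReal.ofReal (t * hsup * CB * CW * M) :=
    (lintegral_mono fun ω => min_le_right _ _).trans hlb
  show |(∫ ω, Real.exp (A1 ω) ∂P) - ∫ ω, Real.exp (A2 ω) ∂P| ≤ t * hsup * CB * CW * M
  calc |(∫ ω, Real.exp (A1 ω) ∂P) - ∫ ω, Real.exp (A2 ω) ∂P|
      = |∫ ω, (Real.exp (A1 ω) - Real.exp (A2 ω)) ∂P| := by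
        rw [integral_sub hexp1 hexp2]
    _ ≤ ∫ ω, |Real.exp (A1 ω) - Real.exp (A2 ω)| ∂P := by
        simpa [Real.norm_eq_abs] using norm_integral_le_integral_norm
          (μ := P) (fun ω => Real.exp (A1 ω) - Real.exp (A2 ω))
    _ ≤ ∫ ω, (min 1 (L ω)).toReal ∂P := integral_mono (hexp1.sub hexp2).abs hmin_int claim1
    _ = (∫⁻ ω, min 1 (L ω) ∂P).toReal := integral_toReal hminmeas.aemeasurable
        (Filter.Eventually.of_forall fun ω =>
          lt_of_le_of_lt (min_le_left _ _) (by simp))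
    _ ≤ t * hsup * CB * CW * M := by
        apply ENNReal.toReal_le_of_le_ofReal ?_ hfin
        have h1 : 0 ≤ t * hsup * CB * CW * M :=
          mul_nonneg (mul_nonneg (mul_nonneg (mul_nonneg ht.le hhs) hCB) hCW) hM0
        exact h1



end

/-- Uniform continuity (in fact a Lipschitz bound) of the transform-domain operator
`Φ_x(ξ)(f,u) = γ_x(f,u) · E[exp(∫₀¹∫₀ᵘ (ξ_y(f,u−s) − 1) B_{yx} W(y,x) h(s) ds dy)]`
with respect to the metric `d(ξ,ζ) = sup_{u∈[0,t],f} ‖ξ_x(f,u) − ζ_x(f,u)‖_{L^p(dx)}`: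
`d(Φ(ξ),Φ(ζ)) ≤ t·‖h‖_∞·C_B·C_W · d(ξ,ζ)`. -/
theorem stmt14 {ι Ω : Type*} [MeasurableSpace Ω] (P : Measure Ω) [IsProbabilityMeasure P]
    (t p CB CW hsup : ℝ) (ht : 0 < t) (hp : 1 ≤ p)
    (hCB : 0 ≤ CB) (hCW : 0 ≤ CW) (hhs : 0 ≤ hsup)
    (W : ℝ → ℝ → ℝ) (B : ℝ → ℝ → Ω → ℝ) (h : ℝ → ℝ) (γ : ℝ → ι → ℝ → ℝ)
    (hW : ∀ y x, W y x ∈ Set.Icc (0 : ℝ) CW)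
    (hh : ∀ s, h s ∈ Set.Icc (0 : ℝ) hsup)
    (hγ : ∀ x f u, γ x f u ∈ Set.Icc (0 : ℝ) 1)
    (hB0 : ∀ y x ω, 0 ≤ B y x ω)
    (hBint : ∀ y x, Integrable (B y x) P)
    (hBmean : ∀ y x, ∫ ω, B y x ω ∂P ≤ CB)
    (hBmeas : ∀ x, Measurable (fun q : ℝ × Ω => B q.1 x q.2))
    (hWmeas : Measurable (Function.uncurry W))
    (hhmeas : Measurable h)
    (Φ : (ℝ → ι → ℝ → ℝ) → (ℝ → ι → ℝ → ℝ))
    (hΦ : ∀ ξ x f u, Φ ξ x f u = γ x f u *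
      ∫ ω, Real.exp (∫ y in Set.Icc (0 : ℝ) 1, ∫ s in Set.Icc (0 : ℝ) u,
        (ξ y f (u - s) - 1) * (B y x ω * (W y x * h s))) ∂P) :
    ∀ ξ ζ : ℝ → ι → ℝ → ℝ,
      (∀ x f u, ξ x f u ∈ Set.Icc (0 : ℝ) 1) →
      (∀ x f u, ζ x f u ∈ Set.Icc (0 : ℝ) 1) →
      (∀ f : ι, Measurable (fun q : ℝ × ℝ => ξ q.1 f q.2)) →
      (∀ f : ι, Measurable (fun q : ℝ × ℝ => ζ q.1 f q.2)) →
      ∀ M : ℝ,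
        (∀ f : ι, ∀ u ∈ Set.Icc (0 : ℝ) t,
          (∫ x in Set.Icc (0 : ℝ) 1, |ξ x f u - ζ x f u| ^ p) ^ (1 / p) ≤ M) →
        ∀ f : ι, ∀ u ∈ Set.Icc (0 : ℝ) t,
          (∫ x in Set.Icc (0 : ℝ) 1, |Φ ξ x f u - Φ ζ x f u| ^ p) ^ (1 / p) ≤
            t * hsup * CB * CW * M := by
  intro ξ ζ hξ hζ hξm hζm M hM f u hu
  obtain ⟨hu0, hut⟩ := hu
  have hM0 : 0 ≤ M :=
    le_trans (Real.rpow_nonneg (setIntegral_nonneg measurableSet_Icc fun y _ =>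
      Real.rpow_nonneg (abs_nonneg _) p) _) (hM f u ⟨hu0, hut⟩)
  have hC0 : 0 ≤ t * hsup * CB * CW * M :=
    mul_nonneg (mul_nonneg (mul_nonneg (mul_nonneg ht.le hhs) hCB) hCW) hM0
  have key : ∀ x, |Φ ξ x f u - Φ ζ x f u| ≤ t * hsup * CB * CW * M := by
    intro x
    rw [hΦ ξ x f u, hΦ ζ x f u, ← mul_sub, abs_mul]
    have h1 := stepA P t p CB CW hsup ht hp hCB hCW hhs W B h hW hh hB0 hBint hBmean
      hBmeas hWmeas hhmeas ξ ζ hξ hζ hξm hζm M hM0 hM f u hu0 hut x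
    have hγle : |γ x f u| ≤ 1 :=
      abs_le.2 ⟨by linarith [(hγ x f u).1], (hγ x f u).2⟩
    calc |γ x f u| * |_| ≤ 1 * (t * hsup * CB * CW * M) :=
          mul_le_mul hγle h1 (abs_nonneg _) zero_le_one
      _ = t * hsup * CB * CW * M := one_mul _
  have hpow : ∀ x, |Φ ξ x f u - Φ ζ x f u| ^ p ≤ (t * hsup * CB * CW * M) ^ p :=
    fun x => Real.rpow_le_rpow (abs_nonneg _) (key x) (by linarith)
  have hint : (∫ x in Set.Icc (0:ℝ) 1, |Φ ξ x f u - Φ ζ x f u| ^ p) ≤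
      (t * hsup * CB * CW * M) ^ p := by
    by_cases hi : IntegrableOn (fun x => |Φ ξ x f u - Φ ζ x f u| ^ p)
        (Set.Icc (0:ℝ) 1) volume
    · calc (∫ x in Set.Icc (0:ℝ) 1, |Φ ξ x f u - Φ ζ x f u| ^ p)
          ≤ ∫ _ in Set.Icc (0:ℝ) 1, (t * hsup * CB * CW * M) ^ p :=
            setIntegral_mono_on hi (integrableOn_const (by simp))
              measurableSet_Icc (fun x _ => hpow x)
        _ = (t * hsup * CB * CW * M) ^ p := by simp
    · rw [integral_undef hi]
      exact Real.rpow_nonneg hC0 p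
  calc (∫ x in Set.Icc (0:ℝ) 1, |Φ ξ x f u - Φ ζ x f u| ^ p) ^ (1 / p)
      ≤ ((t * hsup * CB * CW * M) ^ p) ^ (1 / p) :=
        Real.rpow_le_rpow (setIntegral_nonneg measurableSet_Icc fun x _ =>
          Real.rpow_nonneg (abs_nonneg _) p) hint (by positivity)
    _ = t * hsup * CB * CW * M := by
        rw [← Real.rpow_mul hC0, mul_one_div_cancel (show p ≠ 0 by linarith),
          Real.rpow_one]
end
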